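/- Let k ≥ 1 be an integer and let H be an s-uniform hypergraph (s ≥ 2) with maximum degree Δ ≥ 1. Then the k-chromatic number of H satisfies χ_k(H) ≤ ⌈Δ/k⌉, i.e., the vertex set V(H) can be partitioned into at most ⌈Δ/k⌉ parts V₁, …, V_t such that for each part V_i, every vertex of V_i lies in at most k edges of H entirely contained in V_i. -/

import Mathlib

/-- If `k ≥ 1` and `H` is an `s`-uniform hypergraph (`s ≥ 2`) with maximum degree `Δ ≥ 1`,
then the vertex set can be partitioned into at most `⌈Δ/k⌉` parts (color classes of a
coloring `c`) such that within each part every vertex lies in at most `k` edges entirely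
contained in that part, i.e. `χ_k(H) ≤ ⌈Δ/k⌉`. -/
theorem chromatic_k_le_ceil_maxDegree_div
    {V : Type*} [Fintype V] [DecidableEq V] (s k : ℕ) (hk : 1 ≤ k) (hs : 2 ≤ s)
    (E : Finset (Finset V)) (hunif : ∀ e ∈ E, e.card = s)
    (Δ : ℕ) (hΔ : Δ = Finset.univ.sup (fun v => (E.filter (fun e => v ∈ e)).card))
    (hΔ1 : 1 ≤ Δ) :
    ∃ c : V → Fin (⌈(Δ : ℚ) / (k : ℚ)⌉.toNat),
      ∀ i : Fin (⌈(Δ : ℚ) / (k : ℚ)⌉.toNat), ∀ v : V, c v = i →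
        (E.filter (fun e => v ∈ e ∧ ∀ u ∈ e, c u = i)).card ≤ k := by
  set t : ℕ := (⌈(Δ : ℚ) / (k : ℚ)⌉).toNat with htdef
  have hk0 : (0:ℚ) < (k:ℚ) := by exact_mod_cast hk
  have hpos : 0 < ⌈(Δ : ℚ) / (k : ℚ)⌉ := by
    refine Int.ceil_pos.mpr ?_
    exact div_pos (by exact_mod_cast hΔ1) hk0
  have ht1 : 1 ≤ t := by
    have := Int.toNat_of_nonneg hpos.le
    omega
  have htcast : ((t : ℤ) : ℚ) = ((⌈(Δ : ℚ) / (k : ℚ)⌉ : ℤ) : ℚ) := by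
    rw [htdef, Int.toNat_of_nonneg hpos.le]
  have htk : Δ ≤ t * k := by
    have h1 : (Δ : ℚ) ≤ (⌈(Δ : ℚ) / (k : ℚ)⌉ : ℚ) * k := by
      have := Int.le_ceil ((Δ : ℚ) / (k : ℚ))
      calc (Δ : ℚ) = (Δ : ℚ) / k * k := by field_simp
        _ ≤ (⌈(Δ : ℚ) / (k : ℚ)⌉ : ℚ) * k := by
            exact mul_le_mul_of_nonneg_right this hk0.le
    have h2 : (Δ : ℚ) ≤ (t : ℚ) * k := by
      rw [show ((t:ℚ)) = ((⌈(Δ : ℚ) / (k : ℚ)⌉ : ℤ) : ℚ) by push_cast at htcast ⊢; exact htcast]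
      exact h1
    exact_mod_cast h2
  have hdeg : ∀ v : V, (E.filter (fun e => v ∈ e)).card ≤ Δ := by
    intro v
    rw [hΔ]
    exact Finset.le_sup (f := fun v => (E.filter (fun e => v ∈ e)).card) (Finset.mem_univ v)
  haveI : Nonempty (Fin t) := ⟨⟨0, ht1⟩⟩
  -- the monochromaticity predicate
  set P : (V → Fin t) → Finset V → Prop :=
    fun d e => ∀ u ∈ e, ∀ w ∈ e, d u = d w with hP
  -- choose a coloring minimizing the number of monochromatic edges
  obtain ⟨c, -, hcmin⟩ := Finset.exists_min_image (Finset.univ : Finset (V → Fin t))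
    (fun d => (E.filter (P d)).card) ⟨Classical.arbitrary _, Finset.mem_univ _⟩
  refine ⟨c, ?_⟩
  intro i v hvi
  by_contra hcon
  push_neg at hcon
  -- F j : edges containing v whose other vertices are all colored j
  set F : Fin t → Finset (Finset V) :=
    fun j => E.filter (fun e => v ∈ e ∧ ∀ u ∈ e, u ≠ v → c u = j) with hF
  have hFi : k + 1 ≤ (F i).card := by
    refine le_trans hcon ?_
    apply Finset.card_le_card
    intro e he
    simp only [hF, Finset.mem_filter] at he ⊢
    exact ⟨he.1, he.2.1, fun u hu _ => he.2.2 u hu⟩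
  have hsum : ∑ j : Fin t, (F j).card ≤ Δ := by
    have hdisj : ∀ x ∈ (Finset.univ : Finset (Fin t)), ∀ y ∈ Finset.univ,
        x ≠ y → Disjoint (F x) (F y) := by
      intro x _ y _ hxy
      rw [Finset.disjoint_left]
      intro e hex hey
      simp only [hF, Finset.mem_filter] at hex hey
      have hcard : 1 < e.card := by rw [hunif e hex.1]; omega
      obtain ⟨u, hu, huv⟩ := Finset.exists_mem_ne hcard v
      exact hxy ((hex.2.2 u hu huv).symm.trans (hey.2.2 u hu huv))
    rw [← Finset.card_biUnion hdisj]
    refine le_trans (Finset.card_le_card ?_) (hdeg v)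
    intro e he
    simp only [Finset.mem_biUnion, hF, Finset.mem_filter] at he
    obtain ⟨j, -, he1, he2, -⟩ := he
    exact Finset.mem_filter.mpr ⟨he1, he2⟩
  -- find a color j ≠ i with few edges
  have hex : ∃ j, j ≠ i ∧ (F j).card < k := by
    by_contra h
    push_neg at h
    have hge : ∀ j ∈ (Finset.univ : Finset (Fin t)),
        (if j = i then k + 1 else k) ≤ (F j).card := by
      intro j _
      split
      · next hji => rw [hji]; exact hFi
      · next hji => exact h j hji
    have h2 := Finset.sum_le_sum hge
    have h3 : (∑ j : Fin t, (if j = i then k + 1 else k)) = t * k + 1 := by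
      have : ∀ j : Fin t, (if j = i then k + 1 else k) = k + (if j = i then 1 else 0) := by
        intro j; split <;> omega
      simp only [this, Finset.sum_add_distrib, Finset.sum_const, Finset.card_univ,
        Fintype.card_fin, Finset.sum_ite_eq', Finset.mem_univ, if_true, smul_eq_mul, mul_one]
    rw [h3] at h2
    omega
  obtain ⟨j, hji, hjk⟩ := hex
  set c' : V → Fin t := Function.update c v j with hc'
  -- split monochromatic edges by whether they contain v
  have hsplit : ∀ d : V → Fin t,
      (E.filter (P d)).card =
      (E.filter (fun e => P d e ∧ v ∉ e)).card +
      (E.filter (fun e => P d e ∧ v ∈ e)).card := by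
    intro d
    have h := Finset.card_filter_add_card_filter_not (s := E.filter (P d))
      (p := fun e => v ∉ e)
    rw [Finset.filter_filter, Finset.filter_filter] at h
    simp only [not_not] at h
    omega
  -- edges not containing v: monochromaticity unchanged
  have hA : E.filter (fun e => P c' e ∧ v ∉ e) = E.filter (fun e => P c e ∧ v ∉ e) := by
    apply Finset.filter_congr
    intro e _
    constructor
    · rintro ⟨hp, hve⟩
      refine ⟨fun u hu w hw => ?_, hve⟩
      have h1 := hp u hu w hw
      rwa [hc', Function.update_of_ne (ne_of_mem_of_not_mem hu hve),
        Function.update_of_ne (ne_of_mem_of_not_mem hw hve)] at h1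
    · rintro ⟨hp, hve⟩
      refine ⟨fun u hu w hw => ?_, hve⟩
      rw [hc', Function.update_of_ne (ne_of_mem_of_not_mem hu hve),
        Function.update_of_ne (ne_of_mem_of_not_mem hw hve)]
      exact hp u hu w hw
  -- edges containing v, monochromatic under c': at most k-1
  have hB' : (E.filter (fun e => P c' e ∧ v ∈ e)).card < k := by
    refine lt_of_le_of_lt (Finset.card_le_card ?_) hjk
    intro e he
    simp only [Finset.mem_filter] at he
    simp only [hF, Finset.mem_filter]
    refine ⟨he.1, he.2.2, fun u hu huv => ?_⟩
    have h1 := he.2.1 u hu v he.2.2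
    rwa [hc', Function.update_of_ne huv, Function.update_self] at h1
  -- edges containing v, monochromatic under c: at least k+1
  have hB : k + 1 ≤ (E.filter (fun e => P c e ∧ v ∈ e)).card := by
    refine le_trans hcon (Finset.card_le_card ?_)
    intro e he
    simp only [Finset.mem_filter] at he ⊢
    refine ⟨he.1, fun u hu w hw => ?_, he.2.1⟩
    rw [he.2.2 u hu, he.2.2 w hw]
  have hlt : (E.filter (P c')).card < (E.filter (P c)).card := by
    rw [hsplit c, hsplit c', hA]
    omega
  exact absurd (hcmin c' (Finset.mem_univ _)) (not_le.mpr hlt)
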